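/- For every n ≥ 1 and all integers m_1,…,m_n ≥ 2, there exists an octahedral system without isolated vertex on vertex sets V_1,…,V_n with |V_i| = m_i for all i having exactly 2 + Σ_{i=1}^n (m_i − 2) edges. -/

import Mathlib

/-- An octahedral system: an `n`-uniform `n`-partite hypergraph on the vertex sets `V i`
(edges pick one vertex from each `V i`) satisfying the parity condition. -/
def IsOctahedralSystem {α : Type*} [DecidableEq α] {n : ℕ}
    (V : Fin n → Finset α) (E : Finset (Fin n → α)) : Prop :=
  (∀ e ∈ E, ∀ i, e i ∈ V i) ∧
  ∀ X : Fin n → Finset α, (∀ i, X i ⊆ V i) → (∀ i, (X i).card = 2) →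
    Even ((E.filter fun e => ∀ i, e i ∈ X i).card)

/-- Every vertex belongs to at least one edge. -/
def NoIsolatedVertex {α : Type*} {n : ℕ}
    (V : Fin n → Finset α) (E : Finset (Fin n → α)) : Prop :=
  ∀ i : Fin n, ∀ v ∈ V i, ∃ e ∈ E, e i = v

section OctAux

open Finset

/-- Encoding of vertex `v` of part `i` as a natural number. -/
def octEnc (n i v : ℕ) : ℕ := n * v + i

lemma octEnc_inj {n i j v w : ℕ} (hi : i < n) (hj : j < n)
    (h : octEnc n i v = octEnc n j w) : i = j ∧ v = w := by
  unfold octEnc at h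
  have h1 : (n * v + i) % n = (n * w + j) % n := by rw [h]
  rw [Nat.mul_add_mod, Nat.mul_add_mod, Nat.mod_eq_of_lt hi, Nat.mod_eq_of_lt hj] at h1
  subst h1
  refine ⟨rfl, ?_⟩
  have h2 : n * v = n * w := by omega
  exact Nat.eq_of_mul_eq_mul_left (by omega) h2

/-- The all-zeros edge. -/
def zOct (n : ℕ) : Fin n → ℕ := fun j => octEnc n j 0
/-- The all-ones edge. -/
def oOct (n : ℕ) : Fin n → ℕ := fun j => octEnc n j 1
/-- The extra edge with value `t` at coordinate `i`, ones before, zeros after. -/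
def gOct (n : ℕ) (i : Fin n) (t : ℕ) : Fin n → ℕ :=
  fun j => if j < i then octEnc n j 1 else if j = i then octEnc n j t else octEnc n j 0

lemma gOct_apply_self (n : ℕ) (i : Fin n) (t : ℕ) : gOct n i t i = octEnc n i t := by
  simp [gOct]

lemma gOct_apply_ne {n : ℕ} {i j : Fin n} (t : ℕ) (h : j ≠ i) :
    gOct n i t j = octEnc n j 1 ∨ gOct n i t j = octEnc n j 0 := by
  unfold gOct
  by_cases hj : j < i
  · left; simp [hj]
  · right; simp [hj, h]

/-- The extra edges. -/
def BOct (n : ℕ) (m : Fin n → ℕ) : Finset (Fin n → ℕ) :=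
  univ.biUnion fun i => (Ico 2 (m i)).image (gOct n i)

/-- The edge set. -/
def EOct (n : ℕ) (m : Fin n → ℕ) : Finset (Fin n → ℕ) :=
  insert (zOct n) (insert (oOct n) (BOct n m))

lemma octEnc_val_inj {n : ℕ} {i : Fin n} {v w : ℕ} (h : octEnc n i v = octEnc n i w) :
    v = w := (octEnc_inj i.isLt i.isLt h).2

lemma zOct_ne_oOct {n : ℕ} (hn : 1 ≤ n) : zOct n ≠ oOct n := by
  intro h
  have := congrFun h ⟨0, hn⟩
  exact absurd (octEnc_val_inj this) (by norm_num)

lemma gOct_ne_zOct {n : ℕ} {i : Fin n} {t : ℕ} (ht : 2 ≤ t) : gOct n i t ≠ zOct n := by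
  intro h
  have := congrFun h i
  rw [gOct_apply_self] at this
  have := octEnc_val_inj this
  omega

lemma gOct_ne_oOct {n : ℕ} {i : Fin n} {t : ℕ} (ht : 2 ≤ t) : gOct n i t ≠ oOct n := by
  intro h
  have := congrFun h i
  rw [gOct_apply_self] at this
  have := octEnc_val_inj this
  omega

lemma gOct_inj {n : ℕ} {i i' : Fin n} {t t' : ℕ} (ht : 2 ≤ t) (ht' : 2 ≤ t')
    (h : gOct n i t = gOct n i' t') : i = i' ∧ t = t' := by
  have hii : i = i' := by
    by_contra hne
    have h1 := congrFun h i
    rw [gOct_apply_self] at h1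
    rcases gOct_apply_ne (i := i') t' hne with h2 | h2
    · rw [h2] at h1; have := octEnc_val_inj h1; omega
    · rw [h2] at h1; have := octEnc_val_inj h1; omega
  subst hii
  have h1 := congrFun h i
  rw [gOct_apply_self, gOct_apply_self] at h1
  exact ⟨rfl, octEnc_val_inj h1⟩

/-- The vertex sets. -/
def VOct (n : ℕ) (m : Fin n → ℕ) (i : Fin n) : Finset ℕ :=
  (range (m i)).image (octEnc n i)

lemma mem_VOct {n : ℕ} {m : Fin n → ℕ} {i : Fin n} {x : ℕ} :
    x ∈ VOct n m i ↔ ∃ v < m i, octEnc n i v = x := by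
  simp [VOct]

lemma VOct_card {n : ℕ} (m : Fin n → ℕ) (i : Fin n) : (VOct n m i).card = m i := by
  rw [VOct, card_image_of_injective _ (fun v w h => octEnc_val_inj h), card_range]

lemma VOct_disjoint {n : ℕ} (m : Fin n → ℕ) {i j : Fin n} (hij : i ≠ j) :
    Disjoint (VOct n m i) (VOct n m j) := by
  rw [disjoint_left]
  intro x hxi hxj
  obtain ⟨v, _, hv⟩ := mem_VOct.mp hxi
  obtain ⟨w, _, hw⟩ := mem_VOct.mp hxj
  exact hij (Fin.ext ((octEnc_inj i.isLt j.isLt (hv.trans hw.symm)).1))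

lemma mem_BOct {n : ℕ} {m : Fin n → ℕ} {e : Fin n → ℕ} :
    e ∈ BOct n m ↔ ∃ i : Fin n, ∃ t, 2 ≤ t ∧ t < m i ∧ e = gOct n i t := by
  simp only [BOct, mem_biUnion, mem_univ, true_and, mem_image, mem_Ico]
  constructor
  · rintro ⟨i, t, ⟨h1, h2⟩, h3⟩; exact ⟨i, t, h1, h2, h3.symm⟩
  · rintro ⟨i, t, h1, h2, h3⟩; exact ⟨i, t, ⟨h1, h2⟩, h3.symm⟩

lemma zOct_not_mem_BOct {n : ℕ} {m : Fin n → ℕ} : zOct n ∉ BOct n m := by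
  rw [mem_BOct]
  rintro ⟨i, t, h1, _, h3⟩
  exact gOct_ne_zOct h1 h3.symm

lemma oOct_not_mem_BOct {n : ℕ} {m : Fin n → ℕ} : oOct n ∉ BOct n m := by
  rw [mem_BOct]
  rintro ⟨i, t, h1, _, h3⟩
  exact gOct_ne_oOct h1 h3.symm

lemma BOct_card {n : ℕ} (m : Fin n → ℕ) : (BOct n m).card = ∑ i : Fin n, (m i - 2) := by
  rw [BOct, card_biUnion]
  · refine Finset.sum_congr rfl fun i _ => ?_
    rw [card_image_of_injOn, Nat.card_Ico]
    intro t ht t' ht' h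
    exact (gOct_inj (mem_Ico.mp ht).1 (mem_Ico.mp ht').1 h).2
  · intro i _ j _ hij
    rw [Function.onFun, disjoint_left]
    intro e hei hej
    simp only [mem_image, mem_Ico] at hei hej
    obtain ⟨t, ⟨ht, _⟩, he⟩ := hei
    obtain ⟨t', ⟨ht', _⟩, he'⟩ := hej
    exact hij (gOct_inj ht ht' (he.trans he'.symm)).1

lemma EOct_card {n : ℕ} (hn : 1 ≤ n) (m : Fin n → ℕ) :
    (EOct n m).card = 2 + ∑ i : Fin n, (m i - 2) := by
  rw [EOct, card_insert_of_notMem, card_insert_of_notMem oOct_not_mem_BOct, BOct_card]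
  · ring
  · simp only [mem_insert]
    rintro (h | h)
    · exact zOct_ne_oOct hn h
    · exact zOct_not_mem_BOct h

lemma EOct_subset {n : ℕ} {m : Fin n → ℕ} (hm : ∀ i, 2 ≤ m i) :
    ∀ e ∈ EOct n m, ∀ i, e i ∈ VOct n m i := by
  intro e he i
  rw [EOct, mem_insert, mem_insert] at he
  rw [mem_VOct]
  rcases he with rfl | rfl | he
  · exact ⟨0, by have := hm i; omega, rfl⟩
  · exact ⟨1, by have := hm i; omega, rfl⟩
  · obtain ⟨k, t, h1, h2, rfl⟩ := mem_BOct.mp he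
    by_cases hik : i = k
    · subst hik
      rw [gOct_apply_self]
      exact ⟨t, h2, rfl⟩
    · rcases gOct_apply_ne (i := k) t hik with h | h <;> rw [h]
      · exact ⟨1, by have := hm i; omega, rfl⟩
      · exact ⟨0, by have := hm i; omega, rfl⟩

lemma EOct_noIso {n : ℕ} {m : Fin n → ℕ} :
    ∀ i : Fin n, ∀ v ∈ VOct n m i, ∃ e ∈ EOct n m, e i = v := by
  intro i v hv
  obtain ⟨t, ht, rfl⟩ := mem_VOct.mp hv
  rcases Nat.lt_or_ge t 2 with h2 | h2
  · interval_cases t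
    · exact ⟨zOct n, by simp [EOct], rfl⟩
    · exact ⟨oOct n, by simp [EOct], rfl⟩
  · refine ⟨gOct n i t, ?_, gOct_apply_self n i t⟩
    simp only [EOct, mem_insert]
    exact Or.inr (Or.inr (mem_BOct.mpr ⟨i, t, h2, ht, rfl⟩))

lemma BOct_img_disj {n : ℕ} (m : Fin n → ℕ) {i j : Fin n} (hij : i ≠ j) :
    Disjoint ((Ico 2 (m i)).image (gOct n i)) ((Ico 2 (m j)).image (gOct n j)) := by
  rw [disjoint_left]
  intro e hei hej
  simp only [mem_image, mem_Ico] at hei hej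
  obtain ⟨t, ⟨ht, _⟩, he⟩ := hei
  obtain ⟨t', ⟨ht', _⟩, he'⟩ := hej
  exact hij (gOct_inj ht ht' (he.trans he'.symm)).1

lemma gOct_mem_iff {n : ℕ} (X : Fin n → Finset ℕ) (i : Fin n) (t : ℕ) :
    (∀ j, gOct n i t j ∈ X j) ↔
      octEnc n i t ∈ X i ∧
      ((∀ j : Fin n, j < i → octEnc n j 1 ∈ X j) ∧
       (∀ j : Fin n, i < j → octEnc n j 0 ∈ X j)) := by
  constructor
  · intro h
    refine ⟨by simpa [gOct] using h i, fun j hj => ?_, fun j hj => ?_⟩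
    · have := h j; rwa [gOct, if_pos hj] at this
    · have := h j
      rwa [gOct, if_neg (by exact asymm hj), if_neg (ne_of_gt hj)] at this
  · rintro ⟨h0, h1, h2⟩ j
    rw [gOct]
    split_ifs with ha hb
    · exact h1 j ha
    · subst hb; exact h0
    · exact h2 j (lt_of_le_of_ne (not_lt.mp ha) (Ne.symm hb))

lemma EOct_parity {n : ℕ} (hn : 1 ≤ n) (m : Fin n → ℕ) (hm : ∀ i, 2 ≤ m i)
    (X : Fin n → Finset ℕ) (hX1 : ∀ i, X i ⊆ VOct n m i) (hX2 : ∀ i, (X i).card = 2) :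
    Even (((EOct n m).filter fun e => ∀ i, e i ∈ X i).card) := by
  set P : (Fin n → ℕ) → Prop := fun e => ∀ i, e i ∈ X i with hP
  set F : Fin n → Prop := fun i =>
    (∀ j : Fin n, j < i → octEnc n j 1 ∈ X j) ∧
    (∀ j : Fin n, i < j → octEnc n j 0 ∈ X j) with hF
  set c : Fin n → ℕ := fun i =>
    ((Ico 2 (m i)).filter (fun t => octEnc n i t ∈ X i)).card with hc
  -- counting within each part
  have hA : ∀ i : Fin n, ((range (m i)).filter (fun t => octEnc n i t ∈ X i)).card = 2 := by
    intro i
    have himg : (((range (m i)).filter (fun t => octEnc n i t ∈ X i)).image (octEnc n i))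
        = X i := by
      apply Finset.Subset.antisymm
      · intro x hx
        simp only [mem_image, mem_filter, mem_range] at hx
        obtain ⟨t, ⟨_, ht⟩, rfl⟩ := hx
        exact ht
      · intro x hx
        obtain ⟨v, hv, rfl⟩ := mem_VOct.mp (hX1 i hx)
        exact mem_image.mpr ⟨v, mem_filter.mpr ⟨mem_range.mpr hv, hx⟩, rfl⟩
    have h2 := congrArg Finset.card himg
    rw [card_image_of_injective _ (fun v w h => octEnc_val_inj h)] at h2
    rw [h2, hX2]
  have hcount : ∀ i : Fin n,
      c i + (if octEnc n i 0 ∈ X i then 1 else 0) + (if octEnc n i 1 ∈ X i then 1 else 0)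
        = 2 := by
    intro i
    have hsp : range (m i) = Ico 0 2 ∪ Ico 2 (m i) := by
      rw [Finset.range_eq_Ico, Finset.Ico_union_Ico_eq_Ico (Nat.zero_le 2) (hm i)]
    have h01 : (Ico 0 2 : Finset ℕ) = {0, 1} := by decide
    have := hA i
    rw [hsp, filter_union, card_union_of_disjoint
      ((Finset.Ico_disjoint_Ico_consecutive 0 2 (m i)).mono
        (filter_subset _ _) (filter_subset _ _)), h01] at this
    have h2 : (({0, 1} : Finset ℕ).filter (fun t => octEnc n i t ∈ X i)).card
        = (if octEnc n i 0 ∈ X i then 1 else 0) + (if octEnc n i 1 ∈ X i then 1 else 0) := by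
      by_cases h0 : octEnc n i 0 ∈ X i <;> by_cases h1 : octEnc n i 1 ∈ X i <;>
        simp [Finset.filter_insert, Finset.filter_singleton, h0, h1]
    rw [h2] at this
    simp only [hc]
    omega
  -- the total count
  have hN : ((EOct n m).filter P).card
      = (if P (zOct n) then 1 else 0) + ((if P (oOct n) then 1 else 0)
        + ∑ i : Fin n, (if F i then c i else 0)) := by
    have hcard2 : ∀ (s : Finset (Fin n → ℕ)) (a : Fin n → ℕ), a ∉ s →
        ((insert a s).filter P).card = (if P a then 1 else 0) + (s.filter P).card := by
      intro s a ha
      rw [filter_insert]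
      split_ifs with h
      · rw [card_insert_of_notMem (fun hc' => ha (mem_filter.mp hc').1)]
        omega
      · simp
    rw [EOct, hcard2 _ _ (by
        simp only [mem_insert]
        rintro (h | h)
        · exact zOct_ne_oOct hn h
        · exact zOct_not_mem_BOct h),
      hcard2 _ _ oOct_not_mem_BOct]
    congr 1
    congr 1
    rw [BOct, filter_biUnion, card_biUnion (fun i _ j _ hij =>
      (BOct_img_disj m hij).mono (filter_subset _ _) (filter_subset _ _))]
    refine Finset.sum_congr rfl fun i _ => ?_
    rw [filter_image, card_image_of_injOn
      (fun t ht t' ht' h => (gOct_inj (mem_Ico.mp (mem_filter.mp ht).1).1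
        (mem_Ico.mp (mem_filter.mp ht').1).1 h).2)]
    by_cases hFi : F i
    · rw [if_pos hFi, hc]
      congr 1
      apply Finset.filter_congr
      intro t _
      rw [hP]
      constructor
      · intro h; exact ((gOct_mem_iff X i t).mp h).1
      · intro h; exact (gOct_mem_iff X i t).mpr ⟨h, hFi⟩
    · rw [if_neg hFi]
      rw [Finset.filter_false_of_mem, card_empty]
      intro t _ hPt
      exact hFi ((gOct_mem_iff X i t).mp hPt).2
  rw [hN, even_iff_two_dvd, ← ZMod.natCast_eq_zero_iff]
  push_cast [apply_ite (Nat.cast : ℕ → ZMod 2)]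
  have hchar : ∀ a b : ZMod 2, a + b = 0 → a = b := by
    intro a b h
    rw [← add_zero a, ← CharTwo.add_self_eq_zero b, ← add_assoc, h, zero_add]
  set A : ℕ → ZMod 2 := fun k =>
    if (∀ j : Fin n, (if (j : ℕ) < k then octEnc n j 1 ∈ X j else octEnc n j 0 ∈ X j))
    then 1 else 0 with hA'
  have hZ : (if P (zOct n) then (1 : ZMod 2) else 0) = A 0 := by
    rw [hA']
    refine if_congr ?_ rfl rfl
    simp [hP, zOct]
  have hO : (if P (oOct n) then (1 : ZMod 2) else 0) = A n := by
    rw [hA']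
    refine if_congr ?_ rfl rfl
    simp only [hP, oOct]
    constructor
    · intro h j; rw [if_pos j.isLt]; exact h j
    · intro h j; have := h j; rwa [if_pos j.isLt] at this
  have hterm : ∀ i : Fin n,
      (if F i then ((c i : ℕ) : ZMod 2) else 0) = A (i : ℕ) + A ((i : ℕ) + 1) := by
    intro i
    have hAi : A (i : ℕ) = if F i ∧ octEnc n i 0 ∈ X i then 1 else 0 := by
      rw [hA']
      refine if_congr ?_ rfl rfl
      simp only [hF]
      constructor
      · intro h
        refine ⟨⟨fun j hj => ?_, fun j hj => ?_⟩, ?_⟩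
        · have := h j; rwa [if_pos (by exact hj)] at this
        · have := h j; rwa [if_neg (by exact not_lt.mpr (le_of_lt hj))] at this
        · have := h i; rwa [if_neg (lt_irrefl _)] at this
      · rintro ⟨⟨h1, h2⟩, h0⟩ j
        split_ifs with hj
        · exact h1 j hj
        · rcases eq_or_lt_of_le (not_lt.mp hj : (i : ℕ) ≤ (j : ℕ)) with he | hlt
          · have hij : i = j := Fin.ext he
            subst hij; exact h0
          · exact h2 j hlt
    have hAi1 : A ((i : ℕ) + 1) = if F i ∧ octEnc n i 1 ∈ X i then 1 else 0 := by
      rw [hA']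
      refine if_congr ?_ rfl rfl
      simp only [hF]
      constructor
      · intro h
        refine ⟨⟨fun j hj => ?_, fun j hj => ?_⟩, ?_⟩
        · have := h j; rwa [if_pos (by omega : (j : ℕ) < (i : ℕ) + 1)] at this
        · have := h j
          rwa [if_neg (by omega : ¬ (j : ℕ) < (i : ℕ) + 1)] at this
        · have := h i; rwa [if_pos (by omega)] at this
      · rintro ⟨⟨h1, h2⟩, h0⟩ j
        split_ifs with hj
        · rcases lt_or_eq_of_le (by omega : (j : ℕ) ≤ (i : ℕ)) with hlt | he
          · exact h1 j hlt
          · have hij : j = i := Fin.ext he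
            subst hij; exact h0
        · exact h2 j (by omega)
    have hcz : ((c i : ℕ) : ZMod 2)
        = (if octEnc n i 0 ∈ X i then (1 : ZMod 2) else 0)
          + (if octEnc n i 1 ∈ X i then (1 : ZMod 2) else 0) := by
      have h := hcount i
      by_cases h0 : octEnc n i 0 ∈ X i <;> by_cases h1 : octEnc n i 1 ∈ X i <;>
        simp only [h0, h1, if_true, if_false] at h ⊢ <;>
        first
          | (rw [show c i = 0 from by omega]; decide)
          | (rw [show c i = 1 from by omega]; decide)
          | (rw [show c i = 2 from by omega]; decide)
    by_cases hFi : F i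
    · rw [if_pos hFi, hAi, hAi1,
        if_congr (and_iff_right hFi) rfl rfl, if_congr (and_iff_right hFi) rfl rfl]
      exact hcz
    · rw [if_neg hFi, hAi, hAi1, if_neg (fun h => hFi h.1), if_neg (fun h => hFi h.1),
        add_zero]
  calc (if P (zOct n) then (1 : ZMod 2) else 0) + ((if P (oOct n) then (1 : ZMod 2) else 0)
        + ∑ i : Fin n, (if F i then ((c i : ℕ) : ZMod 2) else 0))
      = A 0 + (A n + ∑ i : Fin n, (A (i : ℕ) + A ((i : ℕ) + 1))) := by
        rw [hZ, hO]
        congr 1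
        congr 1
        exact Finset.sum_congr rfl fun i _ => hterm i
    _ = A 0 + (A n + (A n - A 0)) := by
        congr 2
        rw [Fin.sum_univ_eq_sum_range (fun k => A k + A (k + 1)) n,
          ← Finset.sum_range_sub A n]
        exact Finset.sum_congr rfl fun k _ => by rw [CharTwo.sub_eq_add, add_comm]
    _ = 0 := by
        rw [CharTwo.sub_eq_add]
        rw [show A 0 + (A n + (A n + A 0)) = (A 0 + A 0) + (A n + A n) by ring]
        rw [CharTwo.add_self_eq_zero, CharTwo.add_self_eq_zero, add_zero]

end OctAux

/-- For every `n ≥ 1` and `m_1, …, m_n ≥ 2` there exists an octahedral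
system without isolated vertex with `|V_i| = m_i` having exactly
`2 + Σ_i (m_i − 2)` edges. -/
theorem octahedral_exists_few_edges {n : ℕ} (hn : 1 ≤ n)
    (m : Fin n → ℕ) (hm : ∀ i, 2 ≤ m i) :
    ∃ (V : Fin n → Finset ℕ) (E : Finset (Fin n → ℕ)),
      (∀ i j : Fin n, i ≠ j → Disjoint (V i) (V j)) ∧
      (∀ i, (V i).card = m i) ∧
      IsOctahedralSystem V E ∧
      NoIsolatedVertex V E ∧
      E.card = 2 + ∑ i : Fin n, (m i - 2) := by
  exact ⟨VOct n m, EOct n m, fun i j hij => VOct_disjoint m hij, VOct_card m,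
    ⟨EOct_subset hm, fun X hX1 hX2 => EOct_parity hn m hm X hX1 hX2⟩,
    EOct_noIso, EOct_card hn m⟩
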